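/- Let Γ : [t₀, t₁] → Lo¹_{n+1} be an absolutely continuous curve with Γ(t)^{-1}Γ'(t) = Σ_i β_i(t) l_i where each β_i is a positive integrable function (a convex curve). Then for 1 ≤ i ≤ i+l ≤ n+1, the entry (Γ(t₀)^{-1}Γ(t))_{i+l, i} equals the iterated integral ∫_{t₀ ≤ τ₁ ≤ ⋯ ≤ τ_l ≤ t} β_{i+l−1}(τ₁)⋯β_i(τ_l) dτ₁⋯dτ_l. In particular each such entry is strictly positive for t > t₀. -/

import Mathlib

open Matrix MeasureTheory

/-- The elementary nilpotent matrix `l_j = e_{j+1} e_j^T`. -/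
def lmat (n : ℕ) (j : Fin n) : Matrix (Fin (n + 1)) (Fin (n + 1)) ℝ :=
  Matrix.single j.succ j.castSucc 1

/-- A lower unitriangular matrix. -/
def LowerUni {n : ℕ} (L : Matrix (Fin n) (Fin n) ℝ) : Prop :=
  (∀ i, L i i = 1) ∧ ∀ i j : Fin n, i < j → L i j = 0


-- ## Auxiliary definitions and lemmas

def simplexSet (l : ℕ) (a b : ℝ) : Set (Fin l → ℝ) :=
  {τ | (∀ m, τ m ∈ Set.Icc a b) ∧ Monotone τ}

lemma measurableSet_simplexSet (l : ℕ) (a b : ℝ) : MeasurableSet (simplexSet l a b) := by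
  have h1 : MeasurableSet {τ : Fin l → ℝ | ∀ m, τ m ∈ Set.Icc a b} := by
    have : {τ : Fin l → ℝ | ∀ m, τ m ∈ Set.Icc a b}
        = Set.pi Set.univ (fun _ => Set.Icc a b) := by
      ext τ; simp [Set.mem_pi, Pi.le_def, forall_and]
    rw [this]
    exact MeasurableSet.univ_pi fun _ => measurableSet_Icc
  have h2 : MeasurableSet {τ : Fin l → ℝ | Monotone τ} := by
    have : {τ : Fin l → ℝ | Monotone τ} =
        ⋂ (m : Fin l) (m' : Fin l) (_ : m ≤ m'), {τ : Fin l → ℝ | τ m ≤ τ m'} := by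
      ext τ
      simp only [Set.mem_setOf_eq, Set.mem_iInter]
      exact ⟨fun h m m' hmm => h hmm, fun h a b hab => h a b hab⟩
    rw [this]
    exact MeasurableSet.iInter fun m => .iInter fun m' => .iInter fun _ =>
      measurableSet_le (measurable_pi_apply m) (measurable_pi_apply m')
  exact h1.inter h2

lemma snoc_mem_simplex_iff {l : ℕ} {a b s : ℝ} {τ : Fin l → ℝ} :
    (Fin.snoc τ s ∈ simplexSet (l+1) a b) ↔ (s ∈ Set.Icc a b ∧ τ ∈ simplexSet l a s) := by
  constructor
  · rintro ⟨h1, h2⟩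
    have hs : s ∈ Set.Icc a b := by simpa using h1 (Fin.last l)
    refine ⟨hs, fun m => ?_, ?_⟩
    · have h1m := h1 m.castSucc
      rw [Fin.snoc_castSucc] at h1m
      have hle : τ m ≤ s := by
        have := h2 (Fin.le_last m.castSucc)
        simpa using this
      exact ⟨h1m.1, hle⟩
    · intro p q hpq
      have := h2 (show (p.castSucc : Fin (l+1)) ≤ q.castSucc by simpa using hpq)
      simpa using this
  · rintro ⟨hs, hmem, hmono⟩
    constructor
    · intro m
      refine Fin.lastCases ?_ ?_ m
      · simpa using hs
      · intro m'
        rw [Fin.snoc_castSucc]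
        exact ⟨(hmem m').1, le_trans (hmem m').2 hs.2⟩
    · intro p q hpq
      rcases Fin.eq_castSucc_or_eq_last q with ⟨q', rfl⟩ | rfl
      · rcases Fin.eq_castSucc_or_eq_last p with ⟨p', rfl⟩ | rfl
        · rw [Fin.snoc_castSucc, Fin.snoc_castSucc]
          exact hmono (by simpa using hpq)
        · exact ((Fin.castSucc_lt_last q').not_ge hpq).elim
      · rw [Fin.snoc_last]
        rcases Fin.eq_castSucc_or_eq_last p with ⟨p', rfl⟩ | rfl
        · rw [Fin.snoc_castSucc]; exact (hmem p').2
        · rw [Fin.snoc_last]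

lemma simplex_rec (l : ℕ) (t₀ t : ℝ) (f : Fin (l+1) → ℝ → ℝ)
    (hmeas : ∀ m, Measurable (f m)) (hint : ∀ m, IntegrableOn (f m) (Set.Icc t₀ t)) :
    ∫ τ in simplexSet (l+1) t₀ t, ∏ m, f m (τ m) =
      ∫ s in Set.Icc t₀ t,
        f (Fin.last l) s * ∫ τ in simplexSet l t₀ s, ∏ m : Fin l, f m.castSucc (τ m) := by
  classical
  set e := MeasurableEquiv.piFinSuccAbove (fun _ : Fin (l+1) => ℝ) (Fin.last l) with he
  have hmp : MeasurePreserving e (Measure.pi fun _ => volume)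
      ((volume : Measure ℝ).prod (Measure.pi fun _ => (volume : Measure ℝ))) :=
    measurePreserving_piFinSuccAbove (fun _ => volume) (Fin.last l)
  have hsymm := hmp.symm e
  have hesymm : ∀ p : ℝ × (Fin l → ℝ), e.symm p = Fin.snoc p.2 p.1 := by
    intro p
    rw [he]
    simp [MeasurableEquiv.piFinSuccAbove, Fin.insertNth_last', Fin.snocEquiv]
  -- the preimage set
  set T : Set (ℝ × (Fin l → ℝ)) :=
    {p | p.1 ∈ Set.Icc t₀ t ∧ p.2 ∈ simplexSet l t₀ p.1} with hT
  have hTeq : e.symm ⁻¹' (simplexSet (l+1) t₀ t) = T := by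
    ext p
    rw [Set.mem_preimage, hesymm p]
    exact snoc_mem_simplex_iff
  have hTmeas : MeasurableSet T := by
    rw [← hTeq]
    exact e.symm.measurable (measurableSet_simplexSet _ _ _)
  -- the integrand on the product space
  set g : ℝ × (Fin l → ℝ) → ℝ :=
    fun p => f (Fin.last l) p.1 * ∏ m : Fin l, f m.castSucc (p.2 m) with hg
  have hgmeas : Measurable g := by
    apply Measurable.mul
    · exact (hmeas _).comp measurable_fst
    · exact Finset.measurable_prod Finset.univ fun m _ =>
        (hmeas m.castSucc).comp ((measurable_pi_apply m).comp measurable_snd)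
  -- step 1 : transfer to the product space
  have h1 : (∫ τ in simplexSet (l+1) t₀ t, ∏ m, f m (τ m))
      = ∫ p in T, g p ∂((volume : Measure ℝ).prod (Measure.pi fun _ => volume)) := by
    rw [show (volume : Measure (Fin (l+1) → ℝ)) = Measure.pi fun _ => volume from rfl]
    rw [← hsymm.setIntegral_preimage_emb (MeasurableEquiv.measurableEmbedding _)
      (fun τ => ∏ m, f m (τ m)) (simplexSet (l+1) t₀ t), hTeq]
    refine setIntegral_congr_fun hTmeas fun p _ => ?_
    rw [hesymm p, hg]
    rw [Fin.prod_univ_castSucc]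
    simp only [Fin.snoc_castSucc, Fin.snoc_last]
    ring
  rw [h1]
  -- integrability
  set H1 : ℝ → ℝ := Set.indicator (Set.Icc t₀ t) (fun x => |f (Fin.last l) x|) with hH1
  set H2 : (Fin l → ℝ) → ℝ :=
    fun τ => ∏ m : Fin l, (Set.indicator (Set.Icc t₀ t) (fun x => |f m.castSucc x|)) (τ m) with hH2
  set H : ℝ × (Fin l → ℝ) → ℝ := fun p => H1 p.1 * H2 p.2 with hH
  have hHint : Integrable H ((volume : Measure ℝ).prod (Measure.pi fun _ => volume)) := by
    apply Integrable.mul_prod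
    · exact IntegrableOn.integrable_indicator ((hint (Fin.last l)).abs) measurableSet_Icc
    · rw [hH2, show (Measure.pi fun _ : Fin l => (volume : Measure ℝ))
          = (volume : Measure (Fin l → ℝ)) from rfl]
      exact Integrable.fintype_prod (f := fun m : Fin l =>
        Set.indicator (Set.Icc t₀ t) (fun x => |f m.castSucc x|))
        (fun m => IntegrableOn.integrable_indicator ((hint m.castSucc).abs) measurableSet_Icc)
  have hGint : Integrable (T.indicator g)
      ((volume : Measure ℝ).prod (Measure.pi fun _ => volume)) := by
    refine hHint.mono' ((hgmeas.indicator hTmeas).aestronglyMeasurable) ?_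
    refine Filter.Eventually.of_forall fun p => ?_
    by_cases hp : p ∈ T
    · rw [Set.indicator_of_mem hp]
      obtain ⟨hp1, hp2⟩ := hp
      have h2 : ∀ m : Fin l, p.2 m ∈ Set.Icc t₀ t :=
        fun m => ⟨(hp2.1 m).1, le_trans (hp2.1 m).2 hp1.2⟩
      rw [hH, hg, hH1, hH2]
      simp only [Real.norm_eq_abs, abs_mul, Finset.abs_prod]
      rw [Set.indicator_of_mem hp1]
      apply mul_le_mul_of_nonneg_left _ (abs_nonneg _)
      apply Finset.prod_le_prod (fun m _ => abs_nonneg _)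
      intro m _
      rw [Set.indicator_of_mem (h2 m)]
    · rw [Set.indicator_of_notMem hp]
      simp only [norm_zero, hH, hH1, hH2]
      apply mul_nonneg (Set.indicator_nonneg (fun x _ => abs_nonneg _) _)
      exact Finset.prod_nonneg fun m _ => Set.indicator_nonneg (fun x _ => abs_nonneg _) _
  -- step 2 : Fubini
  rw [← integral_indicator hTmeas, integral_prod _ hGint]
  -- step 3 : compute the inner integral
  rw [← integral_indicator (measurableSet_Icc :
      MeasurableSet (Set.Icc t₀ t))]
  refine integral_congr_ae (Filter.Eventually.of_forall fun s => ?_)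
  simp only []
  by_cases hs : s ∈ Set.Icc t₀ t
  · have hfun : (fun τ => T.indicator g (s, τ))
        = (simplexSet l t₀ s).indicator
            (fun τ => f (Fin.last l) s * ∏ m : Fin l, f m.castSucc (τ m)) := by
      funext τ
      by_cases hτ : τ ∈ simplexSet l t₀ s
      · rw [Set.indicator_of_mem (show (s, τ) ∈ T from ⟨hs, hτ⟩),
          Set.indicator_of_mem hτ]
      · rw [Set.indicator_of_notMem (show (s, τ) ∉ T from fun h => hτ h.2),
          Set.indicator_of_notMem hτ]
    rw [hfun, integral_indicator (measurableSet_simplexSet _ _ _),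
      Set.indicator_of_mem hs, integral_const_mul]
    rfl
  · have hfun : (fun τ => T.indicator g (s, τ)) = fun _ => (0:ℝ) := by
      funext τ
      exact Set.indicator_of_notMem (fun h => hs h.1) _
    rw [hfun, integral_zero, Set.indicator_of_notMem hs]

lemma mul_sum_lmat_apply {n : ℕ} (N : Matrix (Fin (n+1)) (Fin (n+1)) ℝ) (c : Fin n → ℝ)
    (a : Fin (n+1)) (j : Fin n) :
    (N * ∑ j' : Fin n, c j' • lmat n j') a j.castSucc = c j * N a j.succ := by
  rw [Matrix.mul_sum]
  simp only [Matrix.mul_smul, Matrix.sum_apply, Matrix.smul_apply, smul_eq_mul]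
  rw [Finset.sum_eq_single j]
  · rw [lmat, Matrix.mul_single_apply_same, mul_one]
  · intro j' _ hj'
    rw [lmat, Matrix.mul_single_apply_of_ne, mul_zero]
    exact fun h => hj' (Fin.castSucc_injective _ h).symm
  · intro h; exact absurd (Finset.mem_univ j) h

-- unit triangular facts
lemma lowerUni_blockTriangular {n : ℕ} {L : Matrix (Fin n) (Fin n) ℝ} (h : LowerUni L) :
    L.BlockTriangular OrderDual.toDual := fun i j hij => h.2 i j hij

lemma lowerUni_det {n : ℕ} {L : Matrix (Fin n) (Fin n) ℝ} (h : LowerUni L) : L.det = 1 := by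
  rw [Matrix.det_of_lowerTriangular L (lowerUni_blockTriangular h)]
  simp [h.1]

lemma lowerUni_inv {n : ℕ} {L : Matrix (Fin n) (Fin n) ℝ} (h : LowerUni L) : LowerUni L⁻¹ := by
  have hdet : IsUnit L.det := by rw [lowerUni_det h]; exact isUnit_one
  haveI := L.invertibleOfIsUnitDet hdet
  have hBT : L⁻¹.BlockTriangular OrderDual.toDual :=
    Matrix.blockTriangular_inv_of_blockTriangular (lowerUni_blockTriangular h)
  have hzero : ∀ i j : Fin n, i < j → L⁻¹ i j = 0 := fun i j hij => hBT hij
  refine ⟨fun i => ?_, hzero⟩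
  have hmul := Matrix.nonsing_inv_mul L hdet
  have := congrFun (congrFun hmul i) i
  rw [Matrix.mul_apply] at this
  rw [Finset.sum_eq_single i] at this
  · rw [h.1 i, mul_one] at this; rw [this, Matrix.one_apply_eq]
  · intro c _ hc
    rcases lt_or_gt_of_ne hc with hlt | hgt
    · rw [h.2 c i hlt, mul_zero]
    · rw [hzero i c hgt, zero_mul]
  · intro hc; exact absurd (Finset.mem_univ i) hc

lemma lowerUni_mul_diag {n : ℕ} {A B : Matrix (Fin n) (Fin n) ℝ} (hA : LowerUni A)
    (hB : LowerUni B) (a : Fin n) : (A * B) a a = 1 := by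
  rw [Matrix.mul_apply, Finset.sum_eq_single a]
  · rw [hA.1, hB.1, mul_one]
  · intro c _ hc
    rcases lt_or_gt_of_ne hc with hlt | hgt
    · rw [hB.2 c a hlt, mul_zero]
    · rw [hA.2 a c hgt, zero_mul]
  · intro hc; exact absurd (Finset.mem_univ a) hc

lemma idx_pf {n l' i' : ℕ} (h : i' + l' ≤ n) (m : Fin l') :
    i' + (l' - 1 - (m : ℕ)) < n := by have := m.isLt; omega


lemma posQ {n : ℕ} {t₀ t₁ : ℝ} (β : Fin n → ℝ → ℝ)
    (M : ℝ → Matrix (Fin (n+1)) (Fin (n+1)) ℝ)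
    (hβpos : ∀ j : Fin n, ∀ t ∈ Set.Icc t₀ t₁, 0 < β j t)
    (hMdiag : ∀ t' ∈ Set.Icc t₀ t₁, ∀ a, M t' a a = 1)
    (hrec : ∀ (i'' : ℕ) (hi : i'' < n) (a : Fin (n+1)) (t' : ℝ), t' ∈ Set.Icc t₀ t₁ →
      M t' a ⟨i'', by omega⟩ = (1 : Matrix (Fin (n+1)) (Fin (n+1)) ℝ) a ⟨i'', by omega⟩
        + ∫ s in Set.Ioc t₀ t', β ⟨i'', hi⟩ s * M s a ⟨i'' + 1, by omega⟩)
    (hψint : ∀ (i'' : ℕ) (hi : i'' < n) (a : Fin (n+1)),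
      IntegrableOn (fun s => β ⟨i'', hi⟩ s * M s a ⟨i'' + 1, by omega⟩) (Set.Icc t₀ t₁)) :
    ∀ (l' : ℕ) (a : Fin (n+1)) (i' : ℕ) (hi : i' < n + 1) (hval : (a : ℕ) = i' + l')
      (h : i' + l' ≤ n) (t' : ℝ), t' ∈ Set.Icc t₀ t₁ →
      0 ≤ M t' a ⟨i', hi⟩ ∧ (t₀ < t' → 0 < M t' a ⟨i', hi⟩) := by
  intro l'
  induction l' with
  | zero =>
    intro a i' hi hval h t' ht'
    have haa : a = (⟨i', hi⟩ : Fin (n+1)) := Fin.ext (show (a:ℕ) = i' by omega)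
    have hone := hMdiag t' ht' (⟨i', hi⟩ : Fin (n+1))
    constructor
    · rw [haa, hone]; norm_num
    · intro _; rw [haa, hone]; norm_num
  | succ k ih =>
    intro a i' hi hval h t' ht'
    have h1 := hrec i' (by omega) a t' ht'
    have hne : a ≠ (⟨i', hi⟩ : Fin (n+1)) := fun hcon =>
      absurd (show (a:ℕ) = i' from congrArg Fin.val hcon) (by omega)
    rw [Matrix.one_apply_ne hne, zero_add] at h1
    rw [h1]
    have hih := fun (s : ℝ) (hs : s ∈ Set.Icc t₀ t₁) =>
      ih a (i'+1) (by omega) (by omega) (by omega) s hs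
    constructor
    · apply setIntegral_nonneg measurableSet_Ioc
      intro s hs
      have hs' : s ∈ Set.Icc t₀ t₁ := ⟨le_of_lt hs.1, le_trans hs.2 ht'.2⟩
      exact mul_nonneg (le_of_lt (hβpos _ s hs')) ((hih s hs').1)
    · intro htlt
      have hψpos : ∀ s ∈ Set.Ioc t₀ t',
          0 < β ⟨i', by omega⟩ s * M s a ⟨i' + 1, by omega⟩ := by
        intro s hs
        have hs' : s ∈ Set.Icc t₀ t₁ := ⟨le_of_lt hs.1, le_trans hs.2 ht'.2⟩
        exact mul_pos (hβpos _ s hs') ((hih s hs').2 hs.1)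
      have hψi : IntegrableOn (fun s => β ⟨i', by omega⟩ s * M s a ⟨i' + 1, by omega⟩)
          (Set.Ioc t₀ t') :=
        (hψint i' (by omega) a).mono_set
          (fun x hx => ⟨le_of_lt hx.1, le_trans hx.2 ht'.2⟩)
      rw [setIntegral_pos_iff_support_of_nonneg_ae
        ((ae_restrict_iff' measurableSet_Ioc).2
          (Filter.Eventually.of_forall fun s hs => le_of_lt (hψpos s hs))) hψi]
      calc (0:ENNReal) < volume (Set.Ioc t₀ t') := by
            rw [Real.volume_Ioc]; exact ENNReal.ofReal_pos.2 (by linarith)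
        _ ≤ volume (Function.support (fun s => β ⟨i', by omega⟩ s * M s a ⟨i' + 1, by omega⟩)
              ∩ Set.Ioc t₀ t') := measure_mono (fun s hs => ⟨ne_of_gt (hψpos s hs), hs⟩)

lemma formP {n : ℕ} {t₀ t₁ : ℝ} (β g : Fin n → ℝ → ℝ)
    (M : ℝ → Matrix (Fin (n+1)) (Fin (n+1)) ℝ)
    (hgmeas : ∀ j, Measurable (g j))
    (hgint : ∀ j, IntegrableOn (g j) (Set.Icc t₀ t₁))
    (hae : ∀ j, β j =ᵐ[volume.restrict (Set.Icc t₀ t₁)] g j)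
    (hMdiag : ∀ t' ∈ Set.Icc t₀ t₁, ∀ a, M t' a a = 1)
    (hrec : ∀ (i'' : ℕ) (hi : i'' < n) (a : Fin (n+1)) (t' : ℝ), t' ∈ Set.Icc t₀ t₁ →
      M t' a ⟨i'', by omega⟩ = (1 : Matrix (Fin (n+1)) (Fin (n+1)) ℝ) a ⟨i'', by omega⟩
        + ∫ s in Set.Ioc t₀ t', β ⟨i'', hi⟩ s * M s a ⟨i'' + 1, by omega⟩) :
    ∀ (l' : ℕ) (a : Fin (n+1)) (i' : ℕ) (hi : i' < n + 1) (hval : (a : ℕ) = i' + l')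
      (h : i' + l' ≤ n) (t' : ℝ), t' ∈ Set.Icc t₀ t₁ →
      M t' a ⟨i', hi⟩ = ∫ τ in simplexSet l' t₀ t',
        ∏ m : Fin l', g ⟨i' + (l' - 1 - (m : ℕ)), idx_pf h m⟩ (τ m) := by
  intro l'
  induction l' with
  | zero =>
    intro a i' hi hval h t' ht'
    have haa : a = (⟨i', hi⟩ : Fin (n+1)) := Fin.ext (show (a:ℕ) = i' by omega)
    have hone := hMdiag t' ht' (⟨i', hi⟩ : Fin (n+1))
    have hM1 : M t' a ⟨i', hi⟩ = 1 := by rw [haa]; exact hone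
    rw [hM1]
    have hset : simplexSet 0 t₀ t' = Set.univ :=
      Set.eq_univ_iff_forall.2 fun τ =>
        ⟨fun m => m.elim0, fun p q _ => le_of_eq (congrArg τ (Subsingleton.elim p q))⟩
    rw [hset, Measure.restrict_univ]
    simp [volume_pi, Measure.pi_empty_univ, Measure.real]
  | succ k ih =>
    intro a i' hi hval h t' ht'
    have hsub : Set.Icc t₀ t' ⊆ Set.Icc t₀ t₁ := Set.Icc_subset_Icc le_rfl ht'.2
    have h1 := hrec i' (by omega) a t' ht'
    have hne : a ≠ (⟨i', hi⟩ : Fin (n+1)) := fun hcon =>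
      absurd (show (a:ℕ) = i' from congrArg Fin.val hcon) (by omega)
    rw [Matrix.one_apply_ne hne, zero_add] at h1
    rw [h1, ← MeasureTheory.integral_Icc_eq_integral_Ioc]
    have hsr := simplex_rec k t₀ t'
      (fun m : Fin (k+1) => g ⟨i' + (k + 1 - 1 - (m : ℕ)), by have := m.isLt; omega⟩)
      (fun m => hgmeas _) (fun m => (hgint _).mono_set hsub)
    rw [hsr]
    refine integral_congr_ae ?_
    have haej : β ⟨i', by omega⟩ =ᵐ[volume.restrict (Set.Icc t₀ t')] g ⟨i', by omega⟩ :=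
      (hae _).filter_mono (ae_mono (Measure.restrict_mono hsub le_rfl))
    filter_upwards [haej, ae_restrict_mem measurableSet_Icc] with s hseq hsmem
    have hsIcc : s ∈ Set.Icc t₀ t₁ := hsub hsmem
    rw [hseq, ih a (i'+1) (by omega) (by omega) (by omega) s hsIcc]
    congr 1
    · congr 1
      exact Fin.ext (show i' = i' + (k + 1 - 1 - k) by omega)
    · refine (setIntegral_congr_fun (measurableSet_simplexSet k t₀ s)
        fun τ _ => Finset.prod_congr rfl fun m _ => ?_)
      congr 1
      exact Fin.ext (show (i'+1) + (k - 1 - (m:ℕ)) = i' + (k + 1 - 1 - (m:ℕ))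
        by have := m.isLt; omega)

/-- For a convex curve `Γ : [t₀,t₁] → Lo¹_{n+1}` with logarithmic derivative
`Γ⁻¹Γ' = Σ_j β_j l_j` (`β_j` positive and integrable), the entry
`(Γ(t₀)⁻¹ Γ(t))_{i+l, i}` equals the iterated integral
`∫_{t₀ ≤ τ₁ ≤ ⋯ ≤ τ_l ≤ t} β_{i+l-1}(τ₁)⋯β_i(τ_l)`; in particular it is positive
for `t > t₀`. (Everything is 0-indexed.) -/
theorem convex_curve_entry_eq_iterated_integral (n : ℕ) (t₀ t₁ : ℝ) (ht : t₀ < t₁)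
    (Γ : ℝ → Matrix (Fin (n + 1)) (Fin (n + 1)) ℝ) (β : Fin n → ℝ → ℝ)
    (hβpos : ∀ j : Fin n, ∀ t ∈ Set.Icc t₀ t₁, 0 < β j t)
    (hβint : ∀ j : Fin n, IntegrableOn (β j) (Set.Icc t₀ t₁))
    (hΓLo : ∀ t ∈ Set.Icc t₀ t₁, LowerUni (Γ t))
    (hΓ : ∀ t ∈ Set.Icc t₀ t₁, ∀ a b : Fin (n + 1),
      HasDerivAt (fun s => Γ s a b) ((Γ t * ∑ j : Fin n, β j t • lmat n j) a b) t)
    (i l : ℕ) (hl : 1 ≤ l) (hil : i + l ≤ n)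
    (t : ℝ) (htt : t ∈ Set.Icc t₀ t₁) :
    (((Γ t₀)⁻¹ * Γ t) ⟨i + l, by omega⟩ ⟨i, by omega⟩ =
      ∫ τ in {τ : Fin l → ℝ | (∀ m, τ m ∈ Set.Icc t₀ t) ∧ Monotone τ},
        ∏ m : Fin l, β ⟨i + (l - 1 - (m : ℕ)), by have := m.isLt; omega⟩ (τ m)) ∧
    (t₀ < t → 0 < ((Γ t₀)⁻¹ * Γ t) ⟨i + l, by omega⟩ ⟨i, by omega⟩) := by
  have ht01 : t₀ ∈ Set.Icc t₀ t₁ := ⟨le_refl _, le_of_lt ht⟩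
  have hΓ₀ := hΓLo t₀ ht01
  have hdet : IsUnit (Γ t₀).det := by rw [lowerUni_det hΓ₀]; exact isUnit_one
  have hM0 : (Γ t₀)⁻¹ * Γ t₀ = 1 := Matrix.nonsing_inv_mul _ hdet
  have hMdiag : ∀ t' ∈ Set.Icc t₀ t₁, ∀ a, ((Γ t₀)⁻¹ * Γ t') a a = 1 :=
    fun t' ht' a => lowerUni_mul_diag (lowerUni_inv hΓ₀) (hΓLo t' ht') a
  have hMd : ∀ t' ∈ Set.Icc t₀ t₁, ∀ (a b : Fin (n+1)),
      HasDerivAt (fun s => ((Γ t₀)⁻¹ * Γ s) a b)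
        ((((Γ t₀)⁻¹ * Γ t') * ∑ j : Fin n, β j t' • lmat n j) a b) t' := by
    intro t' ht' a b
    have key : HasDerivAt (fun s => ((Γ t₀)⁻¹ * Γ s) a b)
        (((Γ t₀)⁻¹ * (Γ t' * ∑ j : Fin n, β j t' • lmat n j)) a b) t' := by
      simp only [Matrix.mul_apply]
      exact HasDerivAt.fun_sum fun c _ => ((hΓ t' ht' c b).const_mul ((Γ t₀)⁻¹ a c))
    rwa [← Matrix.mul_assoc] at key
  have hM' : ∀ t' ∈ Set.Icc t₀ t₁, ∀ (a : Fin (n+1)) (j : Fin n),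
      HasDerivAt (fun s => ((Γ t₀)⁻¹ * Γ s) a j.castSucc)
        (β j t' * ((Γ t₀)⁻¹ * Γ t') a j.succ) t' := by
    intro t' ht' a j
    have := hMd t' ht' a j.castSucc
    rwa [mul_sum_lmat_apply] at this
  have hcont : ∀ (a b : Fin (n+1)),
      ContinuousOn (fun s => ((Γ t₀)⁻¹ * Γ s) a b) (Set.Icc t₀ t₁) :=
    fun a b s hs => ((hMd s hs a b).continuousAt).continuousWithinAt
  have hψint : ∀ (j : Fin n) (a : Fin (n+1)),
      IntegrableOn (fun s => β j s * ((Γ t₀)⁻¹ * Γ s) a j.succ) (Set.Icc t₀ t₁) := by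
    intro j a
    have hc := hcont a j.succ
    obtain ⟨C, hC⟩ := (isCompact_Icc).exists_bound_of_continuousOn hc
    have h1 : IntegrableOn (fun s => ((Γ t₀)⁻¹ * Γ s) a j.succ * β j s) (Set.Icc t₀ t₁) := by
      apply Integrable.bdd_mul (hβint j) (hc.aestronglyMeasurable measurableSet_Icc)
      exact (ae_restrict_iff' measurableSet_Icc).2 (Filter.Eventually.of_forall hC)
    have heq : (fun s => β j s * ((Γ t₀)⁻¹ * Γ s) a j.succ)
        = fun s => ((Γ t₀)⁻¹ * Γ s) a j.succ * β j s := by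
      funext s; ring
    rw [heq]; exact h1
  have hrec : ∀ (j : Fin n) (a : Fin (n+1)) (t' : ℝ), t' ∈ Set.Icc t₀ t₁ →
      ((Γ t₀)⁻¹ * Γ t') a j.castSucc = (1 : Matrix (Fin (n+1)) (Fin (n+1)) ℝ) a j.castSucc
        + ∫ s in Set.Ioc t₀ t', β j s * ((Γ t₀)⁻¹ * Γ s) a j.succ := by
    intro j a t' ht'
    have hle : t₀ ≤ t' := ht'.1
    have hsub : Set.Icc t₀ t' ⊆ Set.Icc t₀ t₁ := Set.Icc_subset_Icc le_rfl ht'.2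
    have hftc := intervalIntegral.integral_eq_sub_of_hasDerivAt
      (f := fun s => ((Γ t₀)⁻¹ * Γ s) a j.castSucc)
      (f' := fun s => β j s * ((Γ t₀)⁻¹ * Γ s) a j.succ)
      (fun u hu => hM' u (hsub (Set.uIcc_of_le hle ▸ hu)) a j)
      (by
        rw [intervalIntegrable_iff_integrableOn_Icc_of_le hle]
        exact (hψint j a).mono_set hsub)
    rw [intervalIntegral.integral_of_le hle] at hftc
    beta_reduce at hftc
    have h0 : ((Γ t₀)⁻¹ * Γ t₀) a j.castSucc
        = (1 : Matrix (Fin (n+1)) (Fin (n+1)) ℝ) a j.castSucc := by rw [hM0]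
    rw [h0] at hftc
    linarith
  have hrecN : ∀ (i'' : ℕ) (hi : i'' < n) (a : Fin (n+1)) (t' : ℝ), t' ∈ Set.Icc t₀ t₁ →
      ((Γ t₀)⁻¹ * Γ t') a ⟨i'', by omega⟩
        = (1 : Matrix (Fin (n+1)) (Fin (n+1)) ℝ) a ⟨i'', by omega⟩
        + ∫ s in Set.Ioc t₀ t', β ⟨i'', hi⟩ s * ((Γ t₀)⁻¹ * Γ s) a ⟨i'' + 1, by omega⟩ :=
    fun i'' hi a t' ht' => hrec ⟨i'', hi⟩ a t' ht'
  have hψintN : ∀ (i'' : ℕ) (hi : i'' < n) (a : Fin (n+1)),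
      IntegrableOn (fun s => β ⟨i'', hi⟩ s * ((Γ t₀)⁻¹ * Γ s) a ⟨i'' + 1, by omega⟩)
        (Set.Icc t₀ t₁) :=
    fun i'' hi a => hψint ⟨i'', hi⟩ a
  constructor
  · -- the measurable version of β
    set g : Fin n → ℝ → ℝ := fun j => ((hβint j).1.mk (β j)) with hg
    have hgmeas : ∀ j, Measurable (g j) :=
      fun j => (hβint j).1.stronglyMeasurable_mk.measurable
    have hae : ∀ j, β j =ᵐ[volume.restrict (Set.Icc t₀ t₁)] g j :=
      fun j => (hβint j).1.ae_eq_mk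
    have hgint : ∀ j, IntegrableOn (g j) (Set.Icc t₀ t₁) :=
      fun j => (hβint j).congr (hae j)
    have hnull : ∀ j : Fin n, volume {x | β j x ≠ g j x ∧ x ∈ Set.Icc t₀ t₁} = 0 := by
      intro j
      have h := ae_iff.1 (hae j)
      rw [Measure.restrict_apply' measurableSet_Icc] at h
      exact h
    have hP := formP β g (fun s => (Γ t₀)⁻¹ * Γ s) hgmeas hgint hae hMdiag hrecN
      l ⟨i + l, by omega⟩ i (by omega) rfl hil t htt
    have hconv : (∫ τ in simplexSet l t₀ t,
          ∏ m : Fin l, g ⟨i + (l - 1 - (m : ℕ)), idx_pf hil m⟩ (τ m))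
        = ∫ τ in simplexSet l t₀ t,
          ∏ m : Fin l, β ⟨i + (l - 1 - (m : ℕ)), idx_pf hil m⟩ (τ m) := by
      set B : Set (Fin l → ℝ) := ⋃ m : Fin l,
        (fun τ : Fin l → ℝ => τ m) ⁻¹'
          {x | β ⟨i + (l - 1 - (m : ℕ)), idx_pf hil m⟩ x
              ≠ g ⟨i + (l - 1 - (m : ℕ)), idx_pf hil m⟩ x ∧ x ∈ Set.Icc t₀ t₁} with hB
      have hBnull : volume B = 0 := by
        refine measure_iUnion_null fun m => ?_
        rw [show (volume : Measure (Fin l → ℝ)) = Measure.pi fun _ => volume from rfl]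
        exact Measure.pi_eval_preimage_null _ (hnull _)
      have hae' : ∀ᵐ τ : Fin l → ℝ, τ ∉ B := by
        rw [ae_iff]
        have hset : {τ : Fin l → ℝ | ¬ τ ∉ B} = B := by ext τ; simp
        rw [hset]; exact hBnull
      refine setIntegral_congr_ae (measurableSet_simplexSet l t₀ t) ?_
      filter_upwards [hae'] with τ hτ hτS
      refine Finset.prod_congr rfl fun m _ => ?_
      by_contra hne'
      exact hτ (Set.mem_iUnion.2 ⟨m, ⟨fun hc => hne' hc.symm,
        ⟨(hτS.1 m).1, le_trans (hτS.1 m).2 htt.2⟩⟩⟩)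
    exact hP.trans hconv
  · intro htpos
    exact (posQ β (fun s => (Γ t₀)⁻¹ * Γ s) hβpos hMdiag hrecN hψintN
      l ⟨i + l, by omega⟩ i (by omega) rfl hil t htt).2 htpos
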